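/- Let G be a connected graph on n vertices and 1 ≤ k ≤ n. Define the exchange supergraph 𝒢 on node set 𝒞(G;k) with edges between sets intersecting in k−1 elements. Then from any fixed node X₀ of 𝒢, every node of 𝒢 is reachable in 𝒢; in particular, a breadth-first search of 𝒢 started at X₀ visits all of 𝒞(G;k). -/

import Mathlib

set_option linter.unusedSectionVars false

/-- The exchange supergraph on the family of `k`-element vertex sets inducing connected
subgraphs of `G`: two such sets are adjacent iff their intersection has `k - 1` elements. -/
def exchangeGraph {V : Type*} [DecidableEq V] (G : SimpleGraph V) (k : ℕ) :
    SimpleGraph {X : Finset V // X.card = k ∧ (G.induce (X : Set V)).Connected} where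
  Adj A B := A ≠ B ∧ (A.1 ∩ B.1).card = k - 1
  symm := ⟨by
    rintro A B ⟨h1, h2⟩
    exact ⟨h1.symm, by rwa [Finset.inter_comm]⟩⟩
  loopless := ⟨fun A h => h.1 rfl⟩

namespace ExchangeAux

open SimpleGraph

variable {V : Type*} [DecidableEq V] {G : SimpleGraph V}

/-- Connectivity predicate for finsets. -/
def FConn (G : SimpleGraph V) (S : Finset V) : Prop := (G.induce (S : Set V)).Connected

lemma fconn_singleton (G : SimpleGraph V) (v : V) : FConn G {v} := by
  have h := (Walk.nil' v : G.Walk v v).connected_induce_support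
  have hs : {x | x ∈ (Walk.nil' v : G.Walk v v).support} = (({v} : Finset V) : Set V) := by simp
  unfold FConn; rwa [hs] at h

lemma fconn_union {A B : Finset V} (hA : FConn G A) (hB : FConn G B)
    (h : (A ∩ B).Nonempty) : FConn G (A ∪ B) := by
  have h' : ((A : Set V) ∩ (B : Set V)).Nonempty := by
    obtain ⟨x, hx⟩ := h
    exact ⟨x, by simpa [Finset.mem_inter] using hx⟩
  have := G.induce_union_connected (SimpleGraph.Connected.preconnected hA) (SimpleGraph.Connected.preconnected hB) h'
  unfold FConn
  rwa [Finset.coe_union]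

lemma fconn_pair {u w : V} (h : G.Adj u w) : FConn G ({u} ∪ {w}) := by
  have h2 := G.induce_pair_connected_of_adj h
  have hs : ((({u} ∪ {w} : Finset V)) : Set V) = {u, w} := by ext; simp [or_comm]
  unfold FConn; rwa [hs]

/-- A connected finset of size at least 2 has a removable vertex. -/
lemma exists_erase_conn {S : Finset V} (hS : FConn G S)
    (h2 : 2 ≤ S.card) : ∃ a ∈ S, FConn G (S.erase a) := by
  classical
  obtain ⟨u0, hu0⟩ := Finset.card_pos.mp (by omega : 0 < S.card)
  set H := G.induce (S : Set V) with hH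
  have hS' : H.Connected := hS
  have hne : Nonempty (S : Set V) := ⟨⟨u0, hu0⟩⟩
  set u : (S : Set V) := ⟨u0, by simpa using hu0⟩ with hu
  obtain ⟨v, hv⟩ := Finite.exists_max (fun v : (S : Set V) => H.dist u v)
  obtain ⟨w0, hw0S, hw0ne⟩ : ∃ w0 ∈ S, w0 ≠ u0 :=
    Finset.exists_mem_ne (s := S) (by omega) u0
  have hvu : v ≠ u := by
    intro h
    have h1 : 0 < H.dist u ⟨w0, by simpa using hw0S⟩ :=
      hS'.pos_dist_of_ne (by simp [hu, Subtype.ext_iff, hw0ne.symm])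
    have h3 := hv ⟨w0, by simpa using hw0S⟩
    rw [h, SimpleGraph.dist_self] at h3
    omega
  refine ⟨v.1, v.2, ?_⟩
  have huv' : u0 ≠ v.1 := fun h => hvu (Subtype.ext (by simp [hu, h])).symm
  apply G.induce_connected_of_patches u0 (by simp [huv', hu0])
  intro w hw
  simp only [Finset.coe_erase, Set.mem_diff, Finset.mem_coe, Set.mem_singleton_iff] at hw
  obtain ⟨hwS, hwv⟩ := hw
  set w' : (S : Set V) := ⟨w, by simpa using hwS⟩ with hw'
  obtain ⟨p, hp⟩ := (hS' w' u).exists_walk_length_eq_dist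
  have hvsup : v ∉ p.support := by
    intro hmem
    have hvw : v ≠ w' := fun h => hwv (congrArg Subtype.val h).symm
    have hsplit := p.take_spec hmem
    have hlen : (p.takeUntil v hmem).length + (p.dropUntil v hmem).length = p.length := by
      rw [← Walk.length_append, hsplit]
    have h1 : 1 ≤ (p.takeUntil v hmem).length := by
      rcases Nat.eq_zero_or_pos (p.takeUntil v hmem).length with h | h
      · exact absurd (Walk.eq_of_length_eq_zero h) hvw.symm
      · exact h
    have h2' : H.dist v u ≤ (p.dropUntil v hmem).length := SimpleGraph.dist_le _
    have hmax := hv w'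
    have e1 : H.dist v u = H.dist u v := SimpleGraph.dist_comm
    have e2 : H.dist w' u = H.dist u w' := SimpleGraph.dist_comm
    omega
  set q := p.map (SimpleGraph.Embedding.induce (S : Set V)).toHom with hq
  have hsub : {x | x ∈ q.support} ⊆ ((S.erase v.1 : Finset V) : Set V) := by
    intro x hx
    simp only [hq, Walk.support_map, List.mem_map, Set.mem_setOf_eq] at hx
    obtain ⟨y, hy, rfl⟩ := hx
    have hyv : y ≠ v := fun h => hvsup (h ▸ hy)
    simp only [Finset.coe_erase, Set.mem_diff, Finset.mem_coe, Set.mem_singleton_iff]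
    exact ⟨y.2, fun h => hyv (Subtype.ext h)⟩
  refine ⟨{x | x ∈ q.support}, hsub, q.end_mem_support, q.start_mem_support, ?_⟩
  exact q.connected_induce_support _ _

/-- Exchange relation with the extra requirement that the union is connected. -/
def ExR (G : SimpleGraph V) (k : ℕ) (A B : Finset V) : Prop :=
  A.card = k ∧ B.card = k ∧ FConn G A ∧ FConn G B ∧ A ≠ B ∧ (A ∩ B).card = k - 1 ∧
    FConn G (A ∪ B)

lemma walk_rtg {u v : V} (p : G.Walk u v) :
    Relation.ReflTransGen (ExR G 1) {u} {v} := by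
  induction p with
  | nil => exact .refl
  | @cons u w v h q ih =>
    refine .head ?_ ih
    refine ⟨Finset.card_singleton u, Finset.card_singleton w, fconn_singleton G u,
      fconn_singleton G w, ?_, ?_, fconn_pair h⟩
    · simp [Finset.singleton_injective.ne_iff, h.ne]
    · rw [Finset.singleton_inter_of_notMem (by simp [h.ne])]
      simp

lemma exr_lift (k : ℕ) (hk : 1 ≤ k) {C C' : Finset V}
    (h : Relation.ReflTransGen (ExR G k) C C') :
    ∀ e, e ∉ C → FConn G (insert e C) → ∃ e', e' ∉ C' ∧ FConn G (insert e' C') ∧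
      Relation.ReflTransGen (ExR G (k+1)) (insert e C) (insert e' C') := by
  induction h using Relation.ReflTransGen.head_induction_on with
  | refl => exact fun e he hc => ⟨e, he, hc, .refl⟩
  | @head C D hCD _ ih =>
    intro e he hce
    obtain ⟨hcC, hcD, hconnC, hconnD, hne, hinter, hu⟩ := hCD
    obtain ⟨y, hy⟩ : ∃ y, D \ C = {y} := by
      rw [← Finset.card_eq_one]
      have h1 := Finset.card_sdiff_add_card_inter D C
      rw [Finset.inter_comm] at h1
      omega
    obtain ⟨x, hx⟩ : ∃ x, C \ D = {x} := by
      rw [← Finset.card_eq_one]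
      have h1 := Finset.card_sdiff_add_card_inter C D
      omega
    have hyD : y ∈ D := (Finset.mem_sdiff.mp (hy ▸ Finset.mem_singleton_self y)).1
    have hyC : y ∉ C := (Finset.mem_sdiff.mp (hy ▸ Finset.mem_singleton_self y)).2
    have hxC : x ∈ C := (Finset.mem_sdiff.mp (hx ▸ Finset.mem_singleton_self x)).1
    have hxD : x ∉ D := (Finset.mem_sdiff.mp (hx ▸ Finset.mem_singleton_self x)).2
    have hCD_eq : C ∪ D = insert y C := by
      rw [Finset.insert_eq, Finset.union_comm {y} C, ← hy, Finset.union_sdiff_self_eq_union]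
    have hDC_eq : insert x D = insert y C := by
      rw [Finset.insert_eq, Finset.union_comm {x} D, ← hx, Finset.union_sdiff_self_eq_union,
        Finset.union_comm, hCD_eq]
    by_cases hey : e = y
    · subst hey
      have heq : insert e C = insert x D := by rw [hDC_eq]
      obtain ⟨e', he', hc', hr⟩ := ih x hxD (by rw [hDC_eq, ← hCD_eq]; exact hu)
      exact ⟨e', he', hc', heq ▸ hr⟩
    · have hinter2 : (insert e C) ∩ (insert y C) = C := by
        rw [Finset.insert_inter_of_notMem (by simp [hey, he]),
          Finset.inter_insert_of_notMem hyC, Finset.inter_self]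
      have hCne : C.Nonempty := Finset.card_pos.mp (by omega)
      have hstep : ExR G (k+1) (insert e C) (insert y C) := by
        refine ⟨Finset.card_insert_of_notMem he ▸ by omega,
          Finset.card_insert_of_notMem hyC ▸ by omega, hce, hCD_eq ▸ hu, ?_, ?_, ?_⟩
        · intro hEq
          have : e ∈ insert y C := hEq ▸ Finset.mem_insert_self e C
          simp [hey, he] at this
        · rw [hinter2, hcC]; simp
        · exact fconn_union hce (hCD_eq ▸ hu) (by rw [hinter2]; exact hCne)
      obtain ⟨e', he', hc', hr⟩ := ih x hxD (by rw [hDC_eq, ← hCD_eq]; exact hu)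
      exact ⟨e', he', hc', .head hstep (hDC_eq ▸ hr)⟩

lemma exr_key (hG : G.Connected) (k : ℕ) (hk : 1 ≤ k) :
    ∀ A B : Finset V, A.card = k → B.card = k → FConn G A → FConn G B →
      Relation.ReflTransGen (ExR G k) A B := by
  induction k, hk using Nat.le_induction with
  | base =>
    intro A B hA hB _ _
    obtain ⟨u, rfl⟩ := Finset.card_eq_one.mp hA
    obtain ⟨v, rfl⟩ := Finset.card_eq_one.mp hB
    exact walk_rtg (hG u v).some
  | succ k hk ih =>
    intro A B hA hB hcA hcB
    obtain ⟨a, haA, hconnA'⟩ := exists_erase_conn hcA (by omega)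
    obtain ⟨b, hbB, hconnB'⟩ := exists_erase_conn hcB (by omega)
    have hA' : (A.erase a).card = k := by simp [Finset.card_erase_of_mem haA, hA]
    have hB' : (B.erase b).card = k := by simp [Finset.card_erase_of_mem hbB, hB]
    have hrtg := ih (A.erase a) (B.erase b) hA' hB' hconnA' hconnB'
    have hins : insert a (A.erase a) = A := Finset.insert_erase haA
    obtain ⟨e', he', hc', hr⟩ := exr_lift k hk hrtg a (Finset.notMem_erase a A)
      (by rw [hins]; exact hcA)
    rw [hins] at hr
    by_cases heb : e' = b
    · subst heb
      rwa [Finset.insert_erase hbB] at hr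
    · refine hr.trans (.single ?_)
      have he'B : e' ∉ B := fun h => he' (Finset.mem_erase.mpr ⟨heb, h⟩)
      have hinterB : (insert e' (B.erase b)) ∩ B = B.erase b := by
        rw [Finset.insert_inter_of_notMem he'B,
          Finset.inter_eq_left.mpr (Finset.erase_subset b B)]
      have hcard1 : (insert e' (B.erase b)).card = k + 1 := by
        rw [Finset.card_insert_of_notMem he', hB']
      refine ⟨hcard1, hB, hc', hcB, ?_, ?_, ?_⟩
      · intro hEq
        have hb2 : b ∈ insert e' (B.erase b) := hEq.symm ▸ hbB
        rcases Finset.mem_insert.mp hb2 with h | h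
        · exact heb h.symm
        · exact Finset.notMem_erase b B h
      · rw [hinterB, hB']
        omega
      · refine fconn_union hc' hcB ?_
        rw [hinterB]
        exact Finset.card_pos.mp (by omega)

lemma rtg_to_reachable {k : ℕ} {B : Finset V}
    (hB : B.card = k ∧ (G.induce (B : Set V)).Connected) :
    ∀ A, Relation.ReflTransGen (ExR G k) A B →
      ∀ (hA : A.card = k ∧ (G.induce (A : Set V)).Connected),
      (exchangeGraph G k).Reachable ⟨A, hA⟩ ⟨B, hB⟩ := by
  intro A h
  induction h using Relation.ReflTransGen.head_induction_on with
  | refl => intro hA; exact SimpleGraph.Reachable.refl _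
  | @head A D hstep _ ih =>
    intro hA
    obtain ⟨hcA, hcD, hconnA, hconnD, hne, hinter, _⟩ := hstep
    have hadj : (exchangeGraph G k).Adj ⟨A, hA⟩ ⟨D, ⟨hcD, hconnD⟩⟩ :=
      show _ ∧ _ from ⟨fun h => hne (congrArg Subtype.val h), hinter⟩
    exact hadj.reachable.trans (ih ⟨hcD, hconnD⟩)

end ExchangeAux

theorem stmt_18 {V : Type*} [Fintype V] [DecidableEq V] (G : SimpleGraph V)
    (hG : G.Connected) (k : ℕ) (hk : 1 ≤ k) (hkn : k ≤ Fintype.card V)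
    (X₀ X : {X : Finset V // X.card = k ∧ (G.induce (X : Set V)).Connected}) :
    (exchangeGraph G k).Reachable X₀ X := by
  have h := ExchangeAux.exr_key hG k hk X₀.1 X.1 X₀.2.1 X.2.1 X₀.2.2 X.2.2
  have := ExchangeAux.rtg_to_reachable X.2 X₀.1 h X₀.2
  simpa using this
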